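/- Let F_A be a free group on a nonempty set A and let κ = |F_A|. Then F_A can be partitioned into three subsets B₁, B₂, B₃ (pairwise disjoint with union F_A) such that each Bᵢ is neither left κ-large nor right κ-large. -/

import Mathlib

open scoped Pointwise
open Cardinal

universe u

variable {G : Type u}

/-- `A` is left `κ`-large: `G = F * A` for some `F` with `|F| < κ`. -/
def LeftLarge [Group G] (κ : Cardinal.{u}) (A : Set G) : Prop :=
  ∃ F : Set G, #F < κ ∧ F * A = Set.univ

/-- `A` is right `κ`-large: `G = A * F` for some `F` with `|F| < κ`. -/
def RightLarge [Group G] (κ : Cardinal.{u}) (A : Set G) : Prop :=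
  ∃ F : Set G, #F < κ ∧ A * F = Set.univ

/-- `A` is `κ`-large: `G = F * A * F` for some `F` with `|F| < κ`. -/
def KLarge [Group G] (κ : Cardinal.{u}) (A : Set G) : Prop :=
  ∃ F : Set G, #F < κ ∧ F * A * F = Set.univ

/-- `A` is left `κ`-thick: for every `F` with `|F| < κ` there is `a ∈ A` with `F * a ⊆ A`. -/
def LeftThick [Group G] (κ : Cardinal.{u}) (A : Set G) : Prop :=
  ∀ F : Set G, #F < κ → ∃ a ∈ A, F * {a} ⊆ A

/-- `A` is right `κ`-thick: for every `F` with `|F| < κ` there is `a ∈ A` with `a * F ⊆ A`. -/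
def RightThick [Group G] (κ : Cardinal.{u}) (A : Set G) : Prop :=
  ∀ F : Set G, #F < κ → ∃ a ∈ A, {a} * F ⊆ A

/-- `A` is `κ`-thick: for every `F` with `|F| < κ` there is `a ∈ A` with `F * a * F ⊆ A`. -/
def KThick [Group G] (κ : Cardinal.{u}) (A : Set G) : Prop :=
  ∀ F : Set G, #F < κ → ∃ a ∈ A, F * {a} * F ⊆ A

/-- `G` is `κ`-normal: every subset of size `< κ` lies in a normal subgroup of size `< κ`. -/
def KNormal (G : Type u) [Group G] (κ : Cardinal.{u}) : Prop :=
  ∀ F : Set G, #F < κ → ∃ H : Subgroup G, H.Normal ∧ #(H : Set G) < κ ∧ F ⊆ (H : Set G)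

/-- `κ` is a singular cardinal: infinite, with cofinality strictly less than `κ`. -/
def Singular (κ : Cardinal.{u}) : Prop := ℵ₀ ≤ κ ∧ κ.ord.cof < κ


section Aux
open FreeGroup List

variable {α : Type u} [DecidableEq α]

/-- relation for reduced words -/
def RR : (α × Bool) → (α × Bool) → Prop := fun p q => ¬(p.1 = q.1 ∧ p.2 = !q.2)

lemma reduce_chain' (L : List (α × Bool)) : (FreeGroup.reduce L).IsChain RR := by
  induction L with
  | nil => simp
  | cons x L ih =>
    rw [FreeGroup.reduce.cons]
    cases hr : FreeGroup.reduce L with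
    | nil => simp
    | cons hd tl =>
      rw [hr] at ih
      by_cases hc : x.1 = hd.1 ∧ x.2 = !hd.2
      · simpa [hc] using ih.tail
      · simpa [hc] using (List.isChain_cons_cons.mpr ⟨hc, ih⟩ : List.IsChain RR (x :: hd :: tl))

lemma reduce_eq_self {L : List (α × Bool)} (h : L.IsChain RR) : FreeGroup.reduce L = L := by
  induction L with
  | nil => rfl
  | cons x L ih =>
    rw [FreeGroup.reduce.cons, ih h.tail]
    cases L with
    | nil => rfl
    | cons hd tl =>
      have hx : ¬(x.1 = hd.1 ∧ x.2 = !hd.2) := (List.isChain_cons_cons.mp h).1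
      simp [hx]

lemma toWord_chain' (g : FreeGroup α) : g.toWord.IsChain RR := by
  rw [← FreeGroup.reduce_toWord]; exact reduce_chain' _

lemma toWord_mul_of (g : FreeGroup α) (a : α) (h : ∀ p ∈ g.toWord, p.1 ≠ a) :
    (g * FreeGroup.of a).toWord = g.toWord ++ [(a, true)] := by
  have h1 : g * FreeGroup.of a = FreeGroup.mk (g.toWord ++ [(a, true)]) := by
    rw [← FreeGroup.mul_mk, FreeGroup.mk_toWord]; rfl
  rw [h1, FreeGroup.toWord_mk]
  apply reduce_eq_self
  refine List.isChain_append.mpr ⟨toWord_chain' g, List.isChain_singleton _, ?_⟩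
  intro p hp q hq
  have hpm : p ∈ g.toWord := List.mem_of_mem_getLast? hp
  have hq2 : q = (a, true) := by
    have := hq; simp only [List.head?_cons, Option.mem_def, Option.some.injEq] at this
    exact this.symm
  subst hq2
  exact fun hc => h p hpm hc.1

lemma toWord_of_mul (g : FreeGroup α) (a : α) (h : ∀ p ∈ g.toWord, p.1 ≠ a) :
    (FreeGroup.of a * g).toWord = (a, true) :: g.toWord := by
  have h1 : FreeGroup.of a * g = FreeGroup.mk ((a, true) :: g.toWord) := by
    rw [show (FreeGroup.of a : FreeGroup α) = FreeGroup.mk [(a, true)] from rfl]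
    conv_lhs => rw [← FreeGroup.mk_toWord (x := g)]
    rw [FreeGroup.mul_mk]; rfl
  rw [h1, FreeGroup.toWord_mk]
  apply reduce_eq_self
  refine List.isChain_cons.mpr ⟨?_, toWord_chain' g⟩
  intro q hq
  have hqm : q ∈ g.toWord := List.mem_of_mem_head? hq
  exact fun hc => h q hqm hc.1.symm

/-- pick an element of `Fin 3` different from both arguments -/
def avoid3 : Fin 3 → Fin 3 → Fin 3 := fun x y =>
  if 0 ≠ x ∧ 0 ≠ y then 0 else if 1 ≠ x ∧ 1 ≠ y then 1 else 2

lemma avoid3_ne_left : ∀ x y, avoid3 x y ≠ x := by decide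

lemma avoid3_ne_right : ∀ x y, avoid3 x y ≠ y := by decide

/-- color constraint coming from the last letter, when its base occurs exactly once -/
def lastC (cl : α → Fin 3) (g : FreeGroup α) : Option (Fin 3) :=
  g.toWord.getLast?.bind fun p =>
    if (g.toWord.map Prod.fst).count p.1 = 1 then some (cl p.1) else none

/-- color constraint coming from the first letter, when its base occurs exactly once -/
def headC (cl : α → Fin 3) (g : FreeGroup α) : Option (Fin 3) :=
  g.toWord.head?.bind fun p =>
    if (g.toWord.map Prod.fst).count p.1 = 1 then some (cl p.1) else none

def colorOf (cl : α → Fin 3) (g : FreeGroup α) : Fin 3 :=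
  avoid3 ((lastC cl g).getD 0) ((headC cl g).getD 0)

lemma colorOf_ne_of_lastC {cl : α → Fin 3} {g : FreeGroup α} {v : Fin 3}
    (h : lastC cl g = some v) : colorOf cl g ≠ v := by
  rw [colorOf, h]; exact avoid3_ne_left _ _

lemma colorOf_ne_of_headC {cl : α → Fin 3} {g : FreeGroup α} {v : Fin 3}
    (h : headC cl g = some v) : colorOf cl g ≠ v := by
  rw [colorOf, h]; exact avoid3_ne_right _ _

lemma lastC_mul_of (cl : α → Fin 3) (g : FreeGroup α) (a : α)
    (h : ∀ p ∈ g.toWord, p.1 ≠ a) : lastC cl (g * FreeGroup.of a) = some (cl a) := by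
  have hc : (((g * FreeGroup.of a).toWord).map Prod.fst).count a = 1 := by
    rw [toWord_mul_of g a h, List.map_append, List.count_append]
    have h0 : (g.toWord.map Prod.fst).count a = 0 := by
      rw [List.count_eq_zero]
      intro hm
      obtain ⟨p, hp, hpa⟩ := List.mem_map.mp hm
      exact h p hp hpa
    simp [h0]
  have h0 : (g.toWord.map Prod.fst).count a = 0 := by
    rw [List.count_eq_zero]
    intro hm
    obtain ⟨p, hp, hpa⟩ := List.mem_map.mp hm
    exact h p hp hpa
  rw [lastC, toWord_mul_of g a h, List.getLast?_concat]
  rw [toWord_mul_of g a h] at hc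
  simp [hc, h0]

lemma headC_of_mul (cl : α → Fin 3) (g : FreeGroup α) (a : α)
    (h : ∀ p ∈ g.toWord, p.1 ≠ a) : headC cl (FreeGroup.of a * g) = some (cl a) := by
  have hc : (((FreeGroup.of a * g).toWord).map Prod.fst).count a = 1 := by
    rw [toWord_of_mul g a h, List.map_cons, List.count_cons]
    have h0 : (g.toWord.map Prod.fst).count a = 0 := by
      rw [List.count_eq_zero]
      intro hm
      obtain ⟨p, hp, hpa⟩ := List.mem_map.mp hm
      exact h p hp hpa
    simp [h0]
  have h0 : (g.toWord.map Prod.fst).count a = 0 := by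
    rw [List.count_eq_zero]
    intro hm
    obtain ⟨p, hp, hpa⟩ := List.mem_map.mp hm
    exact h p hp hpa
  rw [headC, toWord_of_mul g a h, List.head?_cons]
  rw [toWord_of_mul g a h] at hc
  simp [hc, h0]

open Cardinal in
lemma pack {G : Type u} [Group G] (c : G → Fin 3)
    (hL : ∀ F : Set G, #F < #G → ∀ i : Fin 3, ∃ x : G, ∀ f ∈ F, c (f⁻¹ * x) ≠ i)
    (hR : ∀ F : Set G, #F < #G → ∀ i : Fin 3, ∃ x : G, ∀ f ∈ F, c (x * f⁻¹) ≠ i) :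
    ∃ B₁ B₂ B₃ : Set G,
      Disjoint B₁ B₂ ∧ Disjoint B₁ B₃ ∧ Disjoint B₂ B₃ ∧
      B₁ ∪ B₂ ∪ B₃ = Set.univ ∧
      (¬ LeftLarge (#G) B₁ ∧ ¬ RightLarge (#G) B₁) ∧
      (¬ LeftLarge (#G) B₂ ∧ ¬ RightLarge (#G) B₂) ∧
      (¬ LeftLarge (#G) B₃ ∧ ¬ RightLarge (#G) B₃) := by
  have hdis : ∀ i j : Fin 3, i ≠ j → Disjoint (c ⁻¹' {i}) (c ⁻¹' {j}) := by
    intro i j hij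
    rw [Set.disjoint_left]
    intro g hgi hgj
    exact hij (hgi.symm.trans hgj)
  have hnotL : ∀ i : Fin 3, ¬ LeftLarge (#G) (c ⁻¹' {i}) := by
    intro i ⟨F, hF, hU⟩
    obtain ⟨x, hx⟩ := hL F hF i
    have hxm : x ∈ F * (c ⁻¹' {i}) := hU ▸ Set.mem_univ x
    rw [Set.mem_mul] at hxm
    obtain ⟨f, hf, b, hb, hfb⟩ := hxm
    have hbe : b = f⁻¹ * x := by rw [← hfb]; group
    exact hx f hf (hbe ▸ hb)
  have hnotR : ∀ i : Fin 3, ¬ RightLarge (#G) (c ⁻¹' {i}) := by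
    intro i ⟨F, hF, hU⟩
    obtain ⟨x, hx⟩ := hR F hF i
    have hxm : x ∈ (c ⁻¹' {i}) * F := hU ▸ Set.mem_univ x
    rw [Set.mem_mul] at hxm
    obtain ⟨b, hb, f, hf, hfb⟩ := hxm
    have hbe : b = x * f⁻¹ := by rw [← hfb]; group
    exact hx f hf (hbe ▸ hb)
  refine ⟨c ⁻¹' {0}, c ⁻¹' {1}, c ⁻¹' {2},
    hdis 0 1 (by decide), hdis 0 2 (by decide), hdis 1 2 (by decide), ?_,
    ⟨hnotL 0, hnotR 0⟩, ⟨hnotL 1, hnotR 1⟩, ⟨hnotL 2, hnotR 2⟩⟩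
  ext g
  simp only [Set.mem_union, Set.mem_preimage, Set.mem_singleton_iff, Set.mem_univ, iff_true]
  have : ∀ v : Fin 3, v = 0 ∨ v = 1 ∨ v = 2 := by decide
  rcases this (c g) with h | h | h
  · exact Or.inl (Or.inl h)
  · exact Or.inl (Or.inr h)
  · exact Or.inr h

open Cardinal in
lemma case_countable (A : Type u) [Nonempty A] [Countable A] :
    ∃ B₁ B₂ B₃ : Set (FreeGroup A),
      Disjoint B₁ B₂ ∧ Disjoint B₁ B₃ ∧ Disjoint B₂ B₃ ∧
      B₁ ∪ B₂ ∪ B₃ = Set.univ ∧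
      (¬ LeftLarge (#(FreeGroup A)) B₁ ∧ ¬ RightLarge (#(FreeGroup A)) B₁) ∧
      (¬ LeftLarge (#(FreeGroup A)) B₂ ∧ ¬ RightLarge (#(FreeGroup A)) B₂) ∧
      (¬ LeftLarge (#(FreeGroup A)) B₃ ∧ ¬ RightLarge (#(FreeGroup A)) B₃) := by
  letI := Classical.decEq A
  have hcard : #(FreeGroup A) = ℵ₀ := by
    have h1 : Countable (FreeGroup A) := FreeGroup.toWord_injective.countable
    have h2 : Infinite (FreeGroup A) :=
      Infinite.of_surjective FreeGroup.norm FreeGroup.norm_surjective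
    exact mk_eq_aleph0 _
  set c : FreeGroup A → Fin 3 :=
    fun g => ⟨Nat.sqrt (FreeGroup.norm g) % 3, Nat.mod_lt _ (by norm_num)⟩ with hc
  have key : ∀ F : Set (FreeGroup A), #F < #(FreeGroup A) → ∀ i : Fin 3,
      ∃ x : FreeGroup A, (∀ f ∈ F, c (f⁻¹ * x) ≠ i) ∧ (∀ f ∈ F, c (x * f⁻¹) ≠ i) := by
    intro F hF i
    have hFfin : F.Finite := by
      rw [hcard] at hF; exact lt_aleph0_iff_set_finite.mp hF
    obtain ⟨m, hm⟩ : ∃ m, ∀ f ∈ F, FreeGroup.norm f ≤ m := by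
      obtain ⟨m, hm⟩ := (hFfin.image FreeGroup.norm).bddAbove
      exact ⟨m, fun f hf => hm (Set.mem_image_of_mem _ hf)⟩
    set k := 3 * (m + 1) + ((i.val + 1) % 3) with hk
    set n := k * k + k with hn
    obtain ⟨a⟩ := ‹Nonempty A›
    have hsq : ∀ v : ℕ, n ≤ m + v → v ≤ m + n → Nat.sqrt v = k := by
      intro v h1 h2
      rw [hn] at h1 h2
      have hmk : m ≤ k := by omega
      have hl : k ≤ Nat.sqrt v := Nat.le_sqrt.mpr (by nlinarith)
      have hu : Nat.sqrt v < k + 1 := Nat.sqrt_lt.mpr (by nlinarith)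
      omega
    have hck : ∀ g : FreeGroup A, Nat.sqrt (FreeGroup.norm g) = k → c g ≠ i := by
      intro g hg he
      have h1 : (c g).val = k % 3 := by simp [hc, hg]
      have h2 : i.val < 3 := i.isLt
      rw [he] at h1
      omega
    refine ⟨FreeGroup.of a ^ n, ?_, ?_⟩
    · intro f hf
      apply hck
      apply hsq
      · have h1 : FreeGroup.norm (FreeGroup.of a ^ n) ≤
            FreeGroup.norm f + FreeGroup.norm (f⁻¹ * FreeGroup.of a ^ n) := by
          calc FreeGroup.norm (FreeGroup.of a ^ n)
              = FreeGroup.norm (f * (f⁻¹ * FreeGroup.of a ^ n)) := by rw [mul_inv_cancel_left]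
            _ ≤ _ := FreeGroup.norm_mul_le _ _
        rw [FreeGroup.norm_of_pow] at h1
        have := hm f hf
        omega
      · have h1 := FreeGroup.norm_mul_le f⁻¹ (FreeGroup.of a ^ n)
        rw [FreeGroup.norm_inv_eq, FreeGroup.norm_of_pow] at h1
        have := hm f hf
        omega
    · intro f hf
      apply hck
      apply hsq
      · have h1 : FreeGroup.norm (FreeGroup.of a ^ n) ≤
            FreeGroup.norm (FreeGroup.of a ^ n * f⁻¹) + FreeGroup.norm f := by
          calc FreeGroup.norm (FreeGroup.of a ^ n)
              = FreeGroup.norm (FreeGroup.of a ^ n * f⁻¹ * f) := by rw [inv_mul_cancel_right]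
            _ ≤ _ := FreeGroup.norm_mul_le _ _
        rw [FreeGroup.norm_of_pow] at h1
        have := hm f hf
        omega
      · have h1 := FreeGroup.norm_mul_le (FreeGroup.of a ^ n) f⁻¹
        rw [FreeGroup.norm_inv_eq, FreeGroup.norm_of_pow] at h1
        have := hm f hf
        omega
  exact pack c (fun F hF i => (key F hF i).imp (fun x h => h.1))
    (fun F hF i => (key F hF i).imp (fun x h => h.2))

open Cardinal in
lemma case_infinite (A : Type u) [Infinite A] :
    ∃ B₁ B₂ B₃ : Set (FreeGroup A),
      Disjoint B₁ B₂ ∧ Disjoint B₁ B₃ ∧ Disjoint B₂ B₃ ∧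
      B₁ ∪ B₂ ∪ B₃ = Set.univ ∧
      (¬ LeftLarge (#(FreeGroup A)) B₁ ∧ ¬ RightLarge (#(FreeGroup A)) B₁) ∧
      (¬ LeftLarge (#(FreeGroup A)) B₂ ∧ ¬ RightLarge (#(FreeGroup A)) B₂) ∧
      (¬ LeftLarge (#(FreeGroup A)) B₃ ∧ ¬ RightLarge (#(FreeGroup A)) B₃) := by
  letI := Classical.decEq A
  have hAB : #(A × Bool) = #A := by
    rw [Cardinal.mk_prod, Cardinal.lift_id']
    have hb : Cardinal.lift.{u} #Bool = 2 := by simp [Cardinal.mk_fintype]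
    rw [hb]
    exact Cardinal.mul_eq_left (aleph0_le_mk A)
      (by exact_mod_cast (Cardinal.nat_lt_aleph0 2).le.trans (aleph0_le_mk A))
      (by norm_num)
  have hFA : #(FreeGroup A) ≤ #A := by
    calc #(FreeGroup A) ≤ #(List (A × Bool)) :=
          Cardinal.mk_le_of_injective FreeGroup.toWord_injective
      _ = #(A × Bool) := Cardinal.mk_list_eq_mk _
      _ = #A := hAB
  have h3A : #(A × ULift.{u} (Fin 3)) = #A := by
    rw [Cardinal.mk_prod, Cardinal.lift_id', Cardinal.mk_uLift]
    have hb : Cardinal.lift.{u} #(Fin 3) = 3 := by simp [Cardinal.mk_fintype]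
    rw [Cardinal.lift_id', hb]
    exact Cardinal.mul_eq_left (aleph0_le_mk A)
      (by exact_mod_cast (Cardinal.nat_lt_aleph0 3).le.trans (aleph0_le_mk A))
      (by norm_num)
  obtain ⟨e⟩ : Nonempty (A ≃ A × ULift.{u} (Fin 3)) := Cardinal.eq.mp h3A.symm
  set cl : A → Fin 3 := fun a => ((e a).2).down with hcl
  have hfresh : ∀ S : Set A, #S < #A → ∀ i : Fin 3, ∃ a, cl a = i ∧ a ∉ S := by
    intro S hS i
    by_contra hcon
    push_neg at hcon
    have hsub : {a : A | cl a = i} ⊆ S := fun a ha => hcon a ha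
    have hEq : #({a : A | cl a = i}) = #A := by
      have E1 : {a : A | cl a = i} ≃ {p : A × ULift.{u} (Fin 3) // p.2 = ULift.up i} :=
        e.subtypeEquiv (fun a => by
          simp only [hcl, Set.mem_setOf_eq]
          constructor
          · intro h; cases hu : (e a).2 with | up v => simp [hu] at h; simp [h]
          · intro h; rw [h])
      have E2 : {p : A × ULift.{u} (Fin 3) // p.2 = ULift.up i} ≃ A :=
        ⟨fun p => p.1.1, fun a => ⟨(a, ULift.up i), rfl⟩,
          by intro p; obtain ⟨⟨a, u⟩, h⟩ := p; dsimp only at h ⊢; subst h; rfl,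
          fun a => rfl⟩
      exact Cardinal.mk_congr (E1.trans E2)
    exact absurd (hEq ▸ Cardinal.mk_le_mk_of_subset hsub) (not_le.mpr hS)
  have key : ∀ F : Set (FreeGroup A), #F < #(FreeGroup A) → ∀ i : Fin 3,
      ∃ x : FreeGroup A,
        (∀ f ∈ F, colorOf cl (f⁻¹ * x) ≠ i) ∧ (∀ f ∈ F, colorOf cl (x * f⁻¹) ≠ i) := by
    intro F hF i
    set T : F → Set A := fun f => {b | b ∈ (((f : FreeGroup A)⁻¹).toWord.map Prod.fst)} with hT
    set S : Set A := ⋃ f, T f with hS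
    have hTfin : ∀ f, (T f).Finite := fun f => List.finite_toSet _
    have hScard : #S < #A := by
      rcases lt_or_ge (#F) ℵ₀ with hlt | hge
      · have : Finite ↥F := by rwa [Cardinal.mk_lt_aleph0_iff] at hlt
        have hSf : S.Finite := Set.finite_iUnion hTfin
        exact hSf.lt_aleph0.trans_le (aleph0_le_mk A)
      · have h1 : #S ≤ #↥F * ⨆ f, #(T f) := Cardinal.mk_iUnion_le _
        have hne : Nonempty ↥F := Cardinal.mk_ne_zero_iff.mp
          (ne_of_gt (lt_of_lt_of_le Cardinal.aleph0_pos hge))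
        have h2 : (⨆ f : ↥F, #(T f)) ≤ ℵ₀ :=
          ciSup_le' (fun f => ((hTfin f).lt_aleph0).le)
        have h3 : #S ≤ #↥F * ℵ₀ := h1.trans (mul_le_mul_right h2 _)
        rw [Cardinal.mul_eq_left hge hge Cardinal.aleph0_ne_zero] at h3
        exact (h3.trans_lt hF).trans_le hFA
    obtain ⟨a, hcla, haS⟩ := hfresh S hScard i
    have hfa : ∀ f, f ∈ F → ∀ p ∈ (f⁻¹ : FreeGroup A).toWord, p.1 ≠ a := by
      intro f hf p hp he
      apply haS
      rw [hS]
      exact Set.mem_iUnion.mpr ⟨⟨f, hf⟩, List.mem_map.mpr ⟨p, hp, he⟩⟩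
    refine ⟨FreeGroup.of a, fun f hf => ?_, fun f hf => ?_⟩
    · have h2 := colorOf_ne_of_lastC (lastC_mul_of cl f⁻¹ a (hfa f hf))
      rwa [hcla] at h2
    · have h2 := colorOf_ne_of_headC (headC_of_mul cl f⁻¹ a (hfa f hf))
      rwa [hcla] at h2
  exact pack _ (fun F hF i => (key F hF i).imp fun x h => h.1)
    (fun F hF i => (key F hF i).imp fun x h => h.2)

end Aux

/-- Every free group `F_A` on a nonempty set `A` can be partitioned
into three subsets, each of which is neither left nor right `κ`-large, `κ = |F_A|`. -/
theorem freeGroup_partition_three_not_large (A : Type u) [Nonempty A] :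
    ∃ B₁ B₂ B₃ : Set (FreeGroup A),
      Disjoint B₁ B₂ ∧ Disjoint B₁ B₃ ∧ Disjoint B₂ B₃ ∧
      B₁ ∪ B₂ ∪ B₃ = Set.univ ∧
      (¬ LeftLarge (#(FreeGroup A)) B₁ ∧ ¬ RightLarge (#(FreeGroup A)) B₁) ∧
      (¬ LeftLarge (#(FreeGroup A)) B₂ ∧ ¬ RightLarge (#(FreeGroup A)) B₂) ∧
      (¬ LeftLarge (#(FreeGroup A)) B₃ ∧ ¬ RightLarge (#(FreeGroup A)) B₃) := by
  rcases finite_or_infinite A with hA | hA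
  · exact case_countable A
  · exact case_infinite A
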